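/- Let h : (ℂ, 0) → (ℂ, 0) be a germ of biholomorphism and suppose there exist constants α ∈ ℂ*, β ∈ ℂ, λ ∈ ℂ, an integer k ≥ 1, and a holomorphic germ a with a(0) = 0 and vanishing order k at 0, such that f(y) = α·f(h(y)) + β where f(y) = ∫ y^λ exp(1/a(y)) dy (a fixed local determination on a sector). Then h'(0)^k = 1. -/

import Mathlib

open Complex Filter Set Topology

lemma const_of_discrete {d : ℝ → ℝ} {s : Set ℝ} (hs : s.OrdConnected)
    (hc : ContinuousOn d s) (hd : ∀ x ∈ s, ∃ n : ℤ, d x = 2 * Real.pi * n)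
    {x y : ℝ} (hx : x ∈ s) (hy : y ∈ s) : d x = d y := by
  by_contra hne
  obtain ⟨n, hn⟩ := hd x hx
  obtain ⟨m, hm⟩ := hd y hy
  have hnm : n ≠ m := by
    intro hEq; exact hne (by rw [hn, hm, hEq])
  have hsub : uIcc x y ⊆ s := hs.uIcc_subset hx hy
  have hiv := intermediate_value_uIcc (hc.mono hsub)
  set v : ℝ := 2 * Real.pi * (min n m) + Real.pi with hv
  have hvmem : v ∈ uIcc (d x) (d y) := by
    rcases le_total n m with hle | hle
    · have hlt : (n:ℝ) < m := by exact_mod_cast lt_of_le_of_ne hle hnm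
      have h1 : (n:ℝ) + 1 ≤ m := by exact_mod_cast Int.add_one_le_iff.mpr (lt_of_le_of_ne hle hnm)
      rw [hv, min_eq_left hle]
      apply mem_uIcc.2; left
      constructor
      · rw [hn]; nlinarith [Real.pi_pos]
      · rw [hm]; nlinarith [Real.pi_pos]
    · have h1 : (m:ℝ) + 1 ≤ n := by
        exact_mod_cast Int.add_one_le_iff.mpr (lt_of_le_of_ne hle (Ne.symm hnm))
      rw [hv, min_eq_right hle]
      apply mem_uIcc.2; right
      constructor
      · rw [hm]; nlinarith [Real.pi_pos]
      · rw [hn]; nlinarith [Real.pi_pos]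
  obtain ⟨z, hz, hdz⟩ := hiv hvmem
  obtain ⟨p, hp⟩ := hd z (hsub hz)
  rw [hp, hv] at hdz
  have h2 : (2 * p : ℝ) = 2 * ((min n m : ℤ) : ℝ) + 1 := by
    have hπ := Real.pi_ne_zero
    apply mul_left_cancel₀ hπ
    linear_combination hdz
  have : (2 * p : ℤ) = 2 * (min n m) + 1 := by exact_mod_cast h2
  omega

lemma trig_zero {A B : ℝ} {k : ℕ} (hk : 1 ≤ k) {θ₁ θ₂ : ℝ} (hθ : θ₁ < θ₂)
    (h0 : ∀ θ ∈ Set.Ioo θ₁ θ₂, A * Real.cos (k * θ) + B * Real.sin (k * θ) = 0) :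
    A = 0 ∧ B = 0 := by
  set θ₀ : ℝ := (θ₁ + θ₂) / 2 with hθ₀
  have hmem : θ₀ ∈ Set.Ioo θ₁ θ₂ := ⟨by linarith, by linarith⟩
  set g : ℝ → ℝ := fun θ => A * Real.cos (k * θ) + B * Real.sin (k * θ) with hg
  have hev : g =ᶠ[nhds θ₀] (fun _ => (0:ℝ)) := by
    filter_upwards [isOpen_Ioo.mem_nhds hmem] with θ hθ'
    exact h0 θ hθ'
  have hder : HasDerivAt g (A * (-Real.sin (k * θ₀) * k) + B * (Real.cos (k * θ₀) * k)) θ₀ := by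
    have h1 : HasDerivAt (fun θ : ℝ => (k : ℝ) * θ) (k : ℝ) θ₀ := by
      simpa using (hasDerivAt_id θ₀).const_mul (k : ℝ)
    have hcos : HasDerivAt (fun θ : ℝ => Real.cos (k * θ)) (-Real.sin (k * θ₀) * k) θ₀ :=
      (Real.hasDerivAt_cos (k * θ₀)).comp θ₀ h1
    have hsin : HasDerivAt (fun θ : ℝ => Real.sin (k * θ)) (Real.cos (k * θ₀) * k) θ₀ :=
      (Real.hasDerivAt_sin (k * θ₀)).comp θ₀ h1
    exact (hcos.const_mul A).add (hsin.const_mul B)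
  have hd0 : deriv g θ₀ = 0 := by
    rw [hev.deriv_eq]; simp
  have heq2 : A * (-Real.sin (k * θ₀) * k) + B * (Real.cos (k * θ₀) * k) = 0 := by
    rw [← hder.deriv]; exact hd0
  have heq1 : A * Real.cos (k * θ₀) + B * Real.sin (k * θ₀) = 0 := h0 θ₀ hmem
  have hkne : (k : ℝ) ≠ 0 := by positivity
  have heq3 : -A * Real.sin (k * θ₀) + B * Real.cos (k * θ₀) = 0 := by
    apply mul_right_cancel₀ hkne
    rw [zero_mul]
    linear_combination heq2
  have hpyth := Real.sin_sq_add_cos_sq (k * θ₀)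
  constructor
  · linear_combination Real.cos (k * θ₀) * heq1 - Real.sin (k * θ₀) * heq3 - A * hpyth
  · linear_combination Real.sin (k * θ₀) * heq1 + Real.cos (k * θ₀) * heq3 - B * hpyth

/-- Let `h` be a germ of biholomorphism of `(ℂ,0)` (holomorphic at `0`, `h(0) = 0`,
`h'(0) ≠ 0`), and `a = y^k·u` a holomorphic germ vanishing to order exactly `k ≥ 1`
(`u(0) ≠ 0`).  Suppose on a sector `S` at `0` (preserved by `h`) a fixed determination
`f(y) = ∫ y^λ exp(1/a(y)) dy` (with `y^λ = exp(λ·L(y))` for a continuous branch `L` of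
`log` on `S`) satisfies `f(y) = α·f(h(y)) + β` with `α ∈ ℂ*`.  Then `h'(0)^k = 1`. -/
theorem stmt_11 (h a u f L : ℂ → ℂ) (α β lam : ℂ) (k : ℕ)
    (hk : 1 ≤ k) (hα : α ≠ 0)
    (r θ₁ θ₂ : ℝ) (hr : 0 < r) (hθ : θ₁ < θ₂)
    (hθ₁ : -Real.pi < θ₁) (hθ₂ : θ₂ ≤ Real.pi)
    (S : Set ℂ)
    (hS : S = {y : ℂ | y ≠ 0 ∧ ‖y‖ < r ∧
      θ₁ < Complex.arg y ∧ Complex.arg y < θ₂})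
    (hh : AnalyticAt ℂ h 0) (hh0 : h 0 = 0) (hh' : deriv h 0 ≠ 0)
    (ha : AnalyticAt ℂ a 0) (hu : AnalyticAt ℂ u 0) (hu0 : u 0 ≠ 0)
    (haord : ∀ᶠ y in nhds (0 : ℂ), a y = y ^ k * u y)
    (hane : ∀ y ∈ S, a y ≠ 0)
    (hmaps : Set.MapsTo h S S)
    (hLcont : ContinuousOn L S)
    (hL : ∀ y ∈ S, Complex.exp (L y) = y)
    (hf : ∀ y ∈ S, HasDerivAt f (Complex.exp (lam * L y + (a y)⁻¹)) y)
    (hfeq : ∀ y ∈ S, f y = α * f (h y) + β) :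
    deriv h 0 ^ k = 1 := by
  set c0 : ℂ := deriv h 0 with hc0
  -- continuity of deriv h at 0
  have hderiv_cont : ContinuousAt (deriv h) 0 := by
    obtain ⟨s, hs, hsa⟩ := hh.eventually_analyticAt.exists_mem
    have hoa : AnalyticOnNhd ℂ h s := fun z hz => hsa z hz
    exact ((hoa.deriv) 0 (mem_of_mem_nhds hs)).continuousAt
  have hcont0 : Filter.Tendsto h (nhds 0) (nhds 0) := by
    simpa [hh0] using hh.continuousAt.tendsto
  -- one ball with all local facts
  obtain ⟨ε, hεpos, hball⟩ : ∃ ε > 0, ∀ z ∈ Metric.ball (0:ℂ) ε,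
      AnalyticAt ℂ h z ∧ a z = z ^ k * u z ∧ deriv h z ≠ 0 ∧ a (h z) = (h z) ^ k * u (h z) := by
    have e1 : ∀ᶠ z in nhds (0:ℂ), AnalyticAt ℂ h z := hh.eventually_analyticAt
    have e3 : ∀ᶠ z in nhds (0:ℂ), deriv h z ≠ 0 := hderiv_cont.eventually_ne hh'
    have e4 : ∀ᶠ z in nhds (0:ℂ), a (h z) = (h z) ^ k * u (h z) := hcont0.eventually haord
    have := (e1.and (haord.and (e3.and e4)))
    rw [Metric.eventually_nhds_iff_ball] at this
    obtain ⟨ε, hε, hb⟩ := this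
    exact ⟨ε, hε, fun z hz => ⟨(hb z hz).1, (hb z hz).2.1, (hb z hz).2.2.1, (hb z hz).2.2.2⟩⟩
  -- S is open
  have hSopen : IsOpen S := by
    rw [hS, isOpen_iff_mem_nhds]
    rintro y ⟨hy0, hyr, hya1, hya2⟩
    have hslit : y ∈ Complex.slitPlane :=
      Complex.mem_slitPlane_iff_arg.mpr ⟨by linarith, hy0⟩
    have hargc : ContinuousAt Complex.arg y := Complex.continuousAt_arg hslit
    have f1 : ∀ᶠ z in nhds y, z ≠ 0 := eventually_ne_nhds hy0
    have f2 : ∀ᶠ z in nhds y, ‖z‖ < r :=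
      (continuous_norm.continuousAt).eventually_lt continuousAt_const hyr
    have f3 : ∀ᶠ z in nhds y, θ₁ < Complex.arg z :=
      continuousAt_const.eventually_lt hargc hya1
    have f4 : ∀ᶠ z in nhds y, Complex.arg z < θ₂ :=
      hargc.eventually_lt continuousAt_const hya2
    filter_upwards [f1, f2, f3, f4] with z h1 h2 h3 h4
    exact ⟨h1, h2, h3, h4⟩
  set t₀ : ℝ := min r ε with ht₀def
  have ht₀pos : 0 < t₀ := lt_min hr hεpos
  -- the key per-angle identity
  have KEY : ∀ θ ∈ Set.Ioo θ₁ θ₂,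
      (((Complex.exp (θ * Complex.I))⁻¹) ^ k * (u 0)⁻¹).re
        = (((c0 * Complex.exp (θ * Complex.I))⁻¹) ^ k * (u 0)⁻¹).re := by
    rintro θ ⟨hθa, hθb⟩
    set c : ℂ := Complex.exp (θ * Complex.I) with hcdef
    have hcabs : ‖c‖ = 1 := by
      rw [hcdef, Complex.norm_exp]; simp
    have hcarg : Complex.arg c = θ := by
      rw [hcdef, Complex.exp_mul_I]
      exact Complex.arg_cos_add_sin_mul_I ⟨by linarith, by linarith⟩
    have hcne : c ≠ 0 := Complex.exp_ne_zero _
    -- membership of the ray in S and in the ball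
    have hmem : ∀ t ∈ Set.Ioo (0:ℝ) t₀, ((t:ℂ) * c) ∈ S ∧ ((t:ℂ) * c) ∈ Metric.ball (0:ℂ) ε := by
      rintro t ⟨ht0, htt⟩
      have htne : (t:ℂ) ≠ 0 := Complex.ofReal_ne_zero.mpr (ne_of_gt ht0)
      have habs : ‖(t:ℂ) * c‖ = t := by
        rw [norm_mul, hcabs, Complex.norm_real, Real.norm_eq_abs, abs_of_pos ht0, mul_one]
      have harg : Complex.arg ((t:ℂ) * c) = θ := by
        rw [Complex.arg_real_mul c ht0, hcarg]
      constructor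
      · rw [hS]
        exact ⟨mul_ne_zero htne hcne, by rw [habs]; exact lt_of_lt_of_le htt (min_le_left _ _),
          by rw [harg]; exact hθa, by rw [harg]; exact hθb⟩
      · rw [Metric.mem_ball, dist_zero_right, habs]
        exact lt_of_lt_of_le htt (min_le_right _ _)
    -- E1: the differentiated functional equation
    have E1 : ∀ t ∈ Set.Ioo (0:ℝ) t₀,
        Complex.exp (lam * L ((t:ℂ)*c) + (a ((t:ℂ)*c))⁻¹)
          = α * (Complex.exp (lam * L (h ((t:ℂ)*c)) + (a (h ((t:ℂ)*c)))⁻¹) * deriv h ((t:ℂ)*c)) := by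
      intro t ht
      obtain ⟨hyS, hyB⟩ := hmem t ht
      set y : ℂ := (t:ℂ) * c
      have hfy := hf y hyS
      have hfhy := hf (h y) (hmaps hyS)
      have hdy : HasDerivAt h (deriv h y) y := ((hball y hyB).1).differentiableAt.hasDerivAt
      have hcomp : HasDerivAt (fun z => f (h z))
          (Complex.exp (lam * L (h y) + (a (h y))⁻¹) * deriv h y) y := hfhy.comp y hdy
      have hF : HasDerivAt (fun z => f z - α * f (h z))
          (Complex.exp (lam * L y + (a y)⁻¹)
            - α * (Complex.exp (lam * L (h y) + (a (h y))⁻¹) * deriv h y)) y :=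
        hfy.sub (hcomp.const_mul α)
      have hev : (fun z => f z - α * f (h z)) =ᶠ[nhds y] fun _ => β := by
        filter_upwards [hSopen.mem_nhds hyS] with z hz
        rw [hfeq z hz]; ring
      have hF0 : HasDerivAt (fun z => f z - α * f (h z)) 0 y :=
        (hasDerivAt_const y β).congr_of_eventuallyEq hev
      have heq := hF.unique hF0
      linear_combination heq
    -- E2: logarithmic form
    have E2 : ∀ t ∈ Set.Ioo (0:ℝ) t₀,
        (lam * L ((t:ℂ)*c) + (a ((t:ℂ)*c))⁻¹).re
          = Real.log (‖α‖)
            + ((lam * L (h ((t:ℂ)*c)) + (a (h ((t:ℂ)*c)))⁻¹).re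
              + Real.log (‖deriv h ((t:ℂ)*c)‖)) := by
      intro t ht
      obtain ⟨hyS, hyB⟩ := hmem t ht
      have hdne : ‖deriv h ((t:ℂ)*c)‖ ≠ 0 :=
        norm_ne_zero_iff.mpr ((hball _ hyB).2.2.1)
      have habs := congrArg (‖·‖) (E1 t ht)
      rw [norm_mul, norm_mul, Complex.norm_exp, Complex.norm_exp] at habs
      have hlog := congrArg Real.log habs
      rw [Real.log_exp, Real.log_mul (norm_ne_zero_iff.mpr hα)
          (mul_ne_zero (Real.exp_ne_zero _) hdne),
        Real.log_mul (Real.exp_ne_zero _) hdne, Real.log_exp] at hlog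
      exact hlog
    -- limit machinery
    set l : Filter ℝ := nhdsWithin 0 (Set.Ioi 0) with hldef
    have hIoo : Set.Ioo (0:ℝ) t₀ ∈ l := Ioo_mem_nhdsGT_of_mem ⟨le_refl 0, ht₀pos⟩
    have htc : Filter.Tendsto (fun t : ℝ => (t:ℂ) * c) l (nhds 0) := by
      have : Filter.Tendsto (fun t : ℝ => (t:ℂ)) l (nhds 0) :=
        ((Complex.continuous_ofReal.tendsto 0).mono_left nhdsWithin_le_nhds)
      simpa using this.mul_const c
    have htc' : Filter.Tendsto (fun t : ℝ => (t:ℂ) * c) l (nhdsWithin 0 {(0:ℂ)}ᶜ) := by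
      rw [tendsto_nhdsWithin_iff]
      refine ⟨htc, ?_⟩
      filter_upwards [hIoo] with t ht
      have : ((t:ℂ) * c) ∈ S := (hmem t ht).1
      rw [hS] at this
      exact this.1
    have hm : Filter.Tendsto (fun t : ℝ => h ((t:ℂ)*c) / ((t:ℂ)*c)) l (nhds c0) := by
      have hder : HasDerivAt h c0 0 := hh.differentiableAt.hasDerivAt
      have hslope := (hasDerivAt_iff_tendsto_slope.mp hder).comp htc'
      apply hslope.congr
      intro t
      simp [Function.comp, slope_def_field, hh0]
    have hu_lim : Filter.Tendsto (fun t : ℝ => u ((t:ℂ)*c)) l (nhds (u 0)) :=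
      (hu.continuousAt.tendsto).comp htc
    have hh_lim : Filter.Tendsto (fun t : ℝ => h ((t:ℂ)*c)) l (nhds 0) := hcont0.comp htc
    have huh_lim : Filter.Tendsto (fun t : ℝ => u (h ((t:ℂ)*c))) l (nhds (u 0)) :=
      (hu.continuousAt.tendsto).comp hh_lim
    have hd_lim : Filter.Tendsto (fun t : ℝ => deriv h ((t:ℂ)*c)) l (nhds c0) :=
      (hderiv_cont.tendsto).comp htc
    have hkpos : (0:ℝ) < (k:ℝ) := by exact_mod_cast Nat.lt_of_lt_of_le Nat.zero_lt_one hk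
    have Lpow : Filter.Tendsto (fun t : ℝ => t ^ k) l (nhds 0) := by
      have := ((continuous_pow k).tendsto (0:ℝ)).mono_left (nhdsWithin_le_nhds (s := Set.Ioi 0))
      simpa [zero_pow (Nat.one_le_iff_ne_zero.mp hk)] using this
    have Llog : Filter.Tendsto (fun t : ℝ => t ^ k * Real.log t) l (nhds 0) := by
      apply (tendsto_log_mul_rpow_nhdsGT_zero hkpos).congr'
      filter_upwards [self_mem_nhdsWithin] with t (ht : (0:ℝ) < t)
      rw [Real.rpow_natCast, mul_comm]
    -- the re-composition helper
    have tendsto_re : ∀ {g : ℝ → ℂ} {w : ℂ}, Filter.Tendsto g l (nhds w) →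
        Filter.Tendsto (fun t => (g t).re) l (nhds w.re) := by
      intro g w hg
      exact (Complex.continuous_re.tendsto _).comp hg
    -- T4
    have T4 : Filter.Tendsto (fun t : ℝ => t ^ k * ((a ((t:ℂ)*c))⁻¹).re) l
        (nhds ((c⁻¹ ^ k * (u 0)⁻¹).re)) := by
      have hlim : Filter.Tendsto (fun t : ℝ => (c⁻¹ ^ k * (u ((t:ℂ)*c))⁻¹).re) l
          (nhds ((c⁻¹ ^ k * (u 0)⁻¹).re)) := tendsto_re ((hu_lim.inv₀ hu0).const_mul _)
      apply hlim.congr'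
      filter_upwards [hIoo] with t ht
      obtain ⟨hyS, hyB⟩ := hmem t ht
      have hae : a ((t:ℂ)*c) = ((t:ℂ)*c) ^ k * u ((t:ℂ)*c) := (hball _ hyB).2.1
      have htne : (t:ℂ) ≠ 0 := Complex.ofReal_ne_zero.mpr (ne_of_gt ht.1)
      have hune : u ((t:ℂ)*c) ≠ 0 := by
        intro h0
        have h2 := hane _ hyS
        rw [hae, h0, mul_zero] at h2; exact h2 rfl
      have key : (c⁻¹ ^ k * (u ((t:ℂ)*c))⁻¹) = ((t:ℂ))^k * (a ((t:ℂ)*c))⁻¹ := by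
        rw [hae]
        field_simp
        rw [← mul_pow, one_div, inv_mul_cancel_left₀ hcne]
      rw [key, ← Complex.ofReal_pow, Complex.re_ofReal_mul]
    -- T5
    have hmc : Filter.Tendsto (fun t : ℝ => h ((t:ℂ)*c) / ((t:ℂ)*c) * c) l (nhds (c0 * c)) :=
      hm.mul_const c
    have T5 : Filter.Tendsto (fun t : ℝ => t ^ k * ((a (h ((t:ℂ)*c)))⁻¹).re) l
        (nhds (((c0*c)⁻¹ ^ k * (u 0)⁻¹).re)) := by
      have hlim : Filter.Tendsto
          (fun t : ℝ => (((h ((t:ℂ)*c) / ((t:ℂ)*c) * c)⁻¹) ^ k * (u (h ((t:ℂ)*c)))⁻¹).re) l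
          (nhds (((c0*c)⁻¹ ^ k * (u 0)⁻¹).re)) :=
        tendsto_re (((hmc.inv₀ (mul_ne_zero hh' hcne)).pow k).mul (huh_lim.inv₀ hu0))
      apply hlim.congr'
      filter_upwards [hIoo] with t ht
      obtain ⟨hyS, hyB⟩ := hmem t ht
      have hae : a (h ((t:ℂ)*c)) = (h ((t:ℂ)*c)) ^ k * u (h ((t:ℂ)*c)) := (hball _ hyB).2.2.2
      have htne : (t:ℂ) ≠ 0 := Complex.ofReal_ne_zero.mpr (ne_of_gt ht.1)
      have hSh := hmaps hyS
      rw [hS] at hSh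
      have hhne : h ((t:ℂ)*c) ≠ 0 := hSh.1
      have hune : u (h ((t:ℂ)*c)) ≠ 0 := by
        intro h0
        have h2 := hane _ (hmaps hyS)
        rw [hae, h0, mul_zero] at h2; exact h2 rfl
      have key : ((h ((t:ℂ)*c) / ((t:ℂ)*c) * c)⁻¹) ^ k * (u (h ((t:ℂ)*c)))⁻¹
          = ((t:ℂ))^k * (a (h ((t:ℂ)*c)))⁻¹ := by
        rw [hae]
        field_simp
        rw [← mul_pow, div_mul_cancel₀ _ hhne]
      rw [key, ← Complex.ofReal_pow, Complex.re_ofReal_mul]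
    -- re of L along the ray
    have hLre : ∀ t ∈ Set.Ioo (0:ℝ) t₀, (L ((t:ℂ)*c)).re = Real.log t := by
      intro t ht
      obtain ⟨hyS, _⟩ := hmem t ht
      have habs : Real.exp ((L ((t:ℂ)*c)).re) = t := by
        have h2 := congrArg (‖·‖) (hL _ hyS)
        rwa [Complex.norm_exp, norm_mul, hcabs, Complex.norm_real, Real.norm_eq_abs, abs_of_pos ht.1, mul_one] at h2
      conv_lhs => rw [← Real.log_exp ((L ((t:ℂ)*c)).re)]
      rw [habs]
    -- constancy of branch offset along the ray
    have hdisc : ∀ t ∈ Set.Ioo (0:ℝ) t₀,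
        ∃ n : ℤ, (L ((t:ℂ)*c)).im - θ = 2 * Real.pi * n := by
      intro t ht
      obtain ⟨hyS, _⟩ := hmem t ht
      have hyne : ((t:ℂ)*c) ≠ 0 := by rw [hS] at hyS; exact hyS.1
      have hexp2 : Complex.exp (L ((t:ℂ)*c)) = Complex.exp (Complex.log ((t:ℂ)*c)) := by
        rw [hL _ hyS, Complex.exp_log hyne]
      obtain ⟨n, hn⟩ := Complex.exp_eq_exp_iff_exists_int.mp hexp2
      refine ⟨n, ?_⟩
      have him := congrArg Complex.im hn
      rw [Complex.add_im, Complex.log_im] at him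
      have harg : Complex.arg ((t:ℂ)*c) = θ := by rw [Complex.arg_real_mul c ht.1, hcarg]
      rw [harg] at him
      simp [Complex.mul_im] at him
      rw [him]; ring
    have hconst : ∀ t ∈ Set.Ioo (0:ℝ) t₀,
        (L ((t:ℂ)*c)).im = (L (((t₀/2 : ℝ):ℂ)*c)).im := by
      intro t ht
      have hmid : (t₀/2) ∈ Set.Ioo (0:ℝ) t₀ := ⟨by linarith, by linarith⟩
      have hcont : ContinuousOn (fun t : ℝ => (L ((t:ℂ)*c)).im - θ) (Set.Ioo 0 t₀) := by
        apply ContinuousOn.sub _ continuousOn_const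
        apply Complex.continuous_im.comp_continuousOn
        apply hLcont.comp ((Complex.continuous_ofReal.mul continuous_const).continuousOn)
        intro t ht; exact (hmem t ht).1
      have h2 := const_of_discrete Set.ordConnected_Ioo hcont hdisc ht hmid
      linarith [h2]
    -- T6
    have T6 : Filter.Tendsto (fun t : ℝ => t^k * (lam * L ((t:ℂ)*c)).re) l (nhds 0) := by
      set C : ℝ := (L (((t₀/2:ℝ):ℂ)*c)).im with hCdef
      have hev : (fun t : ℝ => lam.re * (t^k * Real.log t) - (lam.im * C) * t^k)
          =ᶠ[l] (fun t : ℝ => t^k * (lam * L ((t:ℂ)*c)).re) := by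
        filter_upwards [hIoo] with t ht
        rw [Complex.mul_re, hLre t ht, hconst t ht]
        ring
      have h2 := (Llog.const_mul lam.re).sub (Lpow.const_mul (lam.im * C))
      simpa using h2.congr' hev
    -- continuity of h along the ray
    have hhray : ContinuousOn (fun t : ℝ => h ((t:ℂ)*c)) (Set.Ioo (0:ℝ) t₀) := by
      intro t ht
      have h1 : ContinuousAt (fun x : ℝ => (x:ℂ) * c) t :=
        (Complex.continuous_ofReal.mul continuous_const).continuousAt
      have h2 : ContinuousAt h ((t:ℂ)*c) := (hball _ (hmem t ht).2).1.continuousAt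
      have h3 : ContinuousAt (h ∘ fun x : ℝ => (x:ℂ)*c) t := h2.comp (f := fun x : ℝ => (x:ℂ)*c) h1
      exact h3.continuousWithinAt
    -- re of L ∘ h along the ray
    have hLhre : ∀ t ∈ Set.Ioo (0:ℝ) t₀,
        (L (h ((t:ℂ)*c))).re
          = Real.log t + Real.log (‖h ((t:ℂ)*c) / ((t:ℂ)*c) * c‖) := by
      intro t ht
      have hyS2 := hmaps (hmem t ht).1
      have hSh := hyS2
      rw [hS] at hSh
      have hhne : h ((t:ℂ)*c) ≠ 0 := hSh.1
      have htne : (t:ℂ) ≠ 0 := Complex.ofReal_ne_zero.mpr (ne_of_gt ht.1)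
      have hre2 : Real.exp ((L (h ((t:ℂ)*c))).re) = ‖h ((t:ℂ)*c)‖ := by
        have h2 := congrArg (‖·‖) (hL _ hyS2)
        rwa [Complex.norm_exp] at h2
      have hfactor : h ((t:ℂ)*c) = (t:ℂ) * (h ((t:ℂ)*c) / ((t:ℂ)*c) * c) := by
        field_simp
      have hfact : ‖h ((t:ℂ)*c)‖
          = t * ‖h ((t:ℂ)*c) / ((t:ℂ)*c) * c‖ := by
        conv_lhs => rw [hfactor]
        rw [norm_mul, Complex.norm_real, Real.norm_eq_abs, abs_of_pos ht.1]
      have hmne : h ((t:ℂ)*c) / ((t:ℂ)*c) * c ≠ 0 :=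
        mul_ne_zero (div_ne_zero hhne (mul_ne_zero htne hcne)) hcne
      rw [← Real.log_exp ((L (h ((t:ℂ)*c))).re), hre2, hfact,
        Real.log_mul (ne_of_gt ht.1) (norm_ne_zero_iff.mpr hmne)]
    -- constancy of branch offset for h
    have hdisc2 : ∀ t ∈ Set.Ioo (0:ℝ) t₀,
        ∃ n : ℤ, (L (h ((t:ℂ)*c))).im - Complex.arg (h ((t:ℂ)*c)) = 2 * Real.pi * n := by
      intro t ht
      have hyS2 := hmaps (hmem t ht).1
      have hSh := hyS2
      rw [hS] at hSh
      have hhne : h ((t:ℂ)*c) ≠ 0 := hSh.1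
      have hexp2 : Complex.exp (L (h ((t:ℂ)*c))) = Complex.exp (Complex.log (h ((t:ℂ)*c))) := by
        rw [hL _ hyS2, Complex.exp_log hhne]
      obtain ⟨n, hn⟩ := Complex.exp_eq_exp_iff_exists_int.mp hexp2
      refine ⟨n, ?_⟩
      have him := congrArg Complex.im hn
      rw [Complex.add_im, Complex.log_im] at him
      simp [Complex.mul_im] at him
      rw [him]; ring
    have hconst2 : ∀ t ∈ Set.Ioo (0:ℝ) t₀,
        (L (h ((t:ℂ)*c))).im = Complex.arg (h ((t:ℂ)*c))
          + ((L (h (((t₀/2:ℝ):ℂ)*c))).im - Complex.arg (h (((t₀/2:ℝ):ℂ)*c))) := by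
      intro t ht
      have hmid : (t₀/2) ∈ Set.Ioo (0:ℝ) t₀ := ⟨by linarith, by linarith⟩
      have hcont : ContinuousOn
          (fun t : ℝ => (L (h ((t:ℂ)*c))).im - Complex.arg (h ((t:ℂ)*c))) (Set.Ioo 0 t₀) := by
        apply ContinuousOn.sub
        · apply Complex.continuous_im.comp_continuousOn
          apply hLcont.comp hhray
          intro t ht; exact hmaps (hmem t ht).1
        · intro t ht
          have hSh := hmaps (hmem t ht).1
          rw [hS] at hSh
          have hslit2 : h ((t:ℂ)*c) ∈ Complex.slitPlane :=
            Complex.mem_slitPlane_iff_arg.mpr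
              ⟨ne_of_lt (lt_of_lt_of_le hSh.2.2.2 hθ₂), hSh.1⟩
          have h3 : ContinuousWithinAt (Complex.arg ∘ fun t : ℝ => h ((t:ℂ)*c))
              (Set.Ioo (0:ℝ) t₀) t :=
            (Complex.continuousAt_arg hslit2).comp_continuousWithinAt (f := fun t : ℝ => h ((t:ℂ)*c)) (hhray t ht)
          exact h3
      have h2 := const_of_discrete Set.ordConnected_Ioo hcont hdisc2 ht hmid
      linarith [h2]
    -- T7c : t^k * im part tends to 0
    have T7c : Filter.Tendsto (fun t : ℝ => t^k * (L (h ((t:ℂ)*c))).im) l (nhds 0) := by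
      set C2 : ℝ := (L (h (((t₀/2:ℝ):ℂ)*c))).im - Complex.arg (h (((t₀/2:ℝ):ℂ)*c)) with hC2
      apply squeeze_zero_norm' (a := fun t : ℝ => (Real.pi + |C2|) * t^k)
      · filter_upwards [hIoo] with t ht
        have him := hconst2 t ht
        rw [Real.norm_eq_abs, abs_mul, _root_.abs_of_nonneg (pow_nonneg (le_of_lt ht.1) k)]
        have hb : |(L (h ((t:ℂ)*c))).im| ≤ Real.pi + |C2| := by
          rw [him]
          calc |Complex.arg (h ((t:ℂ)*c)) + C2|
              ≤ |Complex.arg (h ((t:ℂ)*c))| + |C2| := abs_add_le _ _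
            _ ≤ Real.pi + |C2| := by
                have := Complex.abs_arg_le_pi (h ((t:ℂ)*c))
                linarith
        calc t^k * |(L (h ((t:ℂ)*c))).im| ≤ t^k * (Real.pi + |C2|) := by
              apply mul_le_mul_of_nonneg_left hb (pow_nonneg (le_of_lt ht.1) k)
          _ = (Real.pi + |C2|) * t^k := by ring
      · simpa using Lpow.const_mul (Real.pi + |C2|)
    -- T7
    have hloglim : Filter.Tendsto
        (fun t : ℝ => Real.log (‖h ((t:ℂ)*c) / ((t:ℂ)*c) * c‖)) l
        (nhds (Real.log (‖c0 * c‖))) :=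
      ((Real.continuousAt_log (norm_ne_zero_iff.mpr (mul_ne_zero hh' hcne))).tendsto).comp
        ((continuous_norm.tendsto _).comp hmc)
    have T7 : Filter.Tendsto (fun t : ℝ => t^k * (lam * L (h ((t:ℂ)*c))).re) l (nhds 0) := by
      have hev : (fun t : ℝ => lam.re * (t^k * Real.log t)
            + lam.re * (t^k * Real.log (‖h ((t:ℂ)*c) / ((t:ℂ)*c) * c‖))
            - lam.im * (t^k * (L (h ((t:ℂ)*c))).im))
          =ᶠ[l] (fun t : ℝ => t^k * (lam * L (h ((t:ℂ)*c))).re) := by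
        filter_upwards [hIoo] with t ht
        rw [Complex.mul_re, hLhre t ht]
        ring
      have h2 := ((Llog.const_mul lam.re).add ((Lpow.mul hloglim).const_mul lam.re)).sub
        (T7c.const_mul lam.im)
      simpa using h2.congr' hev
    -- T8
    have T8 : Filter.Tendsto
        (fun t : ℝ => t^k * Real.log (‖deriv h ((t:ℂ)*c)‖)) l (nhds 0) := by
      have h2 : Filter.Tendsto (fun t : ℝ => Real.log (‖deriv h ((t:ℂ)*c)‖)) l
          (nhds (Real.log (‖c0‖))) :=
        ((Real.continuousAt_log (norm_ne_zero_iff.mpr hh')).tendsto).comp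
          ((continuous_norm.tendsto _).comp hd_lim)
      simpa using Lpow.mul h2
    -- assembly
    have TG : Filter.Tendsto
        (fun t : ℝ => t^k * (lam * L ((t:ℂ)*c) + (a ((t:ℂ)*c))⁻¹).re) l
        (nhds ((c⁻¹ ^ k * (u 0)⁻¹).re)) := by
      have h2 := T6.add T4
      rw [zero_add] at h2
      apply h2.congr
      intro t
      rw [Complex.add_re]; ring
    have TH : Filter.Tendsto
        (fun t : ℝ => t^k * (Real.log (‖α‖)
          + ((lam * L (h ((t:ℂ)*c)) + (a (h ((t:ℂ)*c)))⁻¹).re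
            + Real.log (‖deriv h ((t:ℂ)*c)‖)))) l
        (nhds (((c0*c)⁻¹ ^ k * (u 0)⁻¹).re)) := by
      have Ta : Filter.Tendsto (fun t : ℝ => t^k * Real.log (‖α‖)) l (nhds 0) := by
        simpa using Lpow.mul_const (Real.log (‖α‖))
      have h2 := Ta.add ((T7.add T5).add T8)
      rw [zero_add, zero_add, add_zero] at h2
      apply h2.congr
      intro t
      rw [Complex.add_re]; ring
    have hGH : (fun t : ℝ => t^k * (lam * L ((t:ℂ)*c) + (a ((t:ℂ)*c))⁻¹).re)
        =ᶠ[l] (fun t : ℝ => t^k * (Real.log (‖α‖)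
          + ((lam * L (h ((t:ℂ)*c)) + (a (h ((t:ℂ)*c)))⁻¹).re
            + Real.log (‖deriv h ((t:ℂ)*c)‖)))) := by
      filter_upwards [hIoo] with t ht
      rw [E2 t ht]
    exact tendsto_nhds_unique (TG.congr' hGH) TH
  -- Step D: conclude from KEY
  set z : ℂ := (1 - (c0⁻¹) ^ k) * (u 0)⁻¹ with hzdef
  have htrig : ∀ θ ∈ Set.Ioo θ₁ θ₂,
      z.re * Real.cos (k * θ) + z.im * Real.sin (k * θ) = 0 := by
    intro θ hθmem
    have hKey := KEY θ hθmem
    have hexp : ((Complex.exp ((θ:ℂ) * Complex.I))⁻¹) ^ k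
        = Complex.exp ((↑(-((k:ℝ) * θ)) : ℂ) * Complex.I) := by
      rw [← Complex.exp_neg, ← Complex.exp_nat_mul]; congr 1; push_cast; ring
    have hre : ∀ (x : ℝ) (w : ℂ), (Complex.exp ((x:ℂ) * Complex.I) * w).re
        = Real.cos x * w.re - Real.sin x * w.im := by
      intro x w
      rw [Complex.exp_mul_I, ← Complex.ofReal_cos, ← Complex.ofReal_sin]
      simp [Complex.mul_re, Complex.mul_im, Complex.cos_ofReal_re, Complex.sin_ofReal_re]
    have hcomb : (Complex.exp ((↑(-((k:ℝ) * θ)) : ℂ) * Complex.I) * z).re = 0 := by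
      have heq : Complex.exp ((↑(-((k:ℝ) * θ)) : ℂ) * Complex.I) * z
          = (Complex.exp ((θ:ℂ)*Complex.I))⁻¹ ^ k * (u 0)⁻¹
            - (c0 * Complex.exp ((θ:ℂ) * Complex.I))⁻¹ ^ k * (u 0)⁻¹ := by
        rw [← hexp, hzdef, mul_inv, mul_pow]; ring
      rw [heq, Complex.sub_re, hKey]; ring
    rw [hre, Real.cos_neg, Real.sin_neg] at hcomb
    linarith [hcomb]
  obtain ⟨hre0, him0⟩ := trig_zero hk hθ htrig
  have hz0 : z = 0 := Complex.ext (by simpa using hre0) (by simpa using him0)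
  have h1 : 1 - c0⁻¹ ^ k = 0 := by
    rcases mul_eq_zero.mp (hzdef ▸ hz0) with h' | h'
    · exact h'
    · exact absurd h' (inv_ne_zero hu0)
  have h2 : (c0 ^ k)⁻¹ = 1 := by
    rw [← inv_pow]
    linear_combination -h1
  exact inv_eq_one.mp h2
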